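/- For any set X of n points in ℝ^d (with n ≥ 2) and any ε ∈ (0, 1/2), there exist a positive integer m with m ≤ C·ε^{-2}·log n (for a universal constant C > 0) and a map f : X → ℝ^m such that for all x, y ∈ X, (1-ε)·‖x-y‖₂² ≤ ‖f(x)-f(y)‖₂² ≤ (1+ε)·‖x-y‖₂². -/

import Mathlib

open MeasureTheory Real Finset RealInnerProductSpace
open scoped ENNReal

noncomputable section JLAux

/-- standard gaussian density -/
def jlRho (t : ℝ) : ℝ := (Real.sqrt (2 * π))⁻¹ * Real.exp (-t ^ 2 / 2)

lemma jlRho_nonneg (t : ℝ) : 0 ≤ jlRho t := by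
  unfold jlRho; positivity

lemma continuous_jlRho : Continuous jlRho := by
  unfold jlRho; fun_prop

lemma jl_integrable_1d {s : ℝ} (hs : s < 1/2) :
    Integrable (fun t => Real.exp (s * t ^ 2) * jlRho t) := by
  have h : (fun t => Real.exp (s * t ^ 2) * jlRho t)
      = fun t => (Real.sqrt (2 * π))⁻¹ * Real.exp (-(1/2 - s) * t ^ 2) := by
    funext t
    simp only [jlRho]
    rw [mul_left_comm, ← Real.exp_add]; ring_nf
  rw [h]
  exact (integrable_exp_neg_mul_sq (by linarith)).const_mul _

lemma jl_integral_1d {s : ℝ} (hs : s < 1/2) :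
    ∫ t, Real.exp (s * t ^ 2) * jlRho t = (Real.sqrt (1 - 2 * s))⁻¹ := by
  have h : (fun t => Real.exp (s * t ^ 2) * jlRho t)
      = fun t => (Real.sqrt (2 * π))⁻¹ * Real.exp (-(1/2 - s) * t ^ 2) := by
    funext t
    simp only [jlRho]
    rw [mul_left_comm, ← Real.exp_add]; ring_nf
  rw [h, MeasureTheory.integral_const_mul, integral_gaussian]
  have h2 : (0:ℝ) < 1/2 - s := by linarith
  have h3 : π / (1/2 - s) = (2*π) * (1-2*s)⁻¹ := by
    field_simp
  rw [h3, Real.sqrt_mul (by positivity : (0:ℝ) ≤ 2*π) ((1-2*s)⁻¹), Real.sqrt_inv]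
  have h4 : Real.sqrt (2*π) ≠ 0 := by positivity
  field_simp

lemma integrable_jlRho : Integrable jlRho := by
  have := jl_integrable_1d (s := 0) (by norm_num)
  simpa using this

lemma integral_jlRho : ∫ t, jlRho t = 1 := by
  have := jl_integral_1d (s := 0) (by norm_num)
  simpa using this

lemma rowD_eq {d : ℕ} (v : Fin d → ℝ) :
    ∏ i, jlRho (v i) = ((Real.sqrt (2*π))⁻¹)^d * Real.exp (-(∑ i, (v i)^2)/2) := by
  unfold jlRho
  rw [Finset.prod_mul_distrib, Finset.prod_const, card_univ, Fintype.card_fin]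
  congr 1
  rw [← Real.exp_sum]
  congr 1
  rw [neg_div, ← Finset.sum_div, ← neg_div, Finset.sum_neg_distrib]

lemma euclid_normsq {d : ℕ} (x : EuclideanSpace ℝ (Fin d)) :
    ‖x‖^2 = ∑ i, (x i)^2 := by
  rw [EuclideanSpace.norm_eq, Real.sq_sqrt (by positivity)]
  simp [Real.norm_eq_abs, sq_abs]

/-- product-form integrand on pi space -/
lemma prod_form_key {d : ℕ} (i₀ : Fin d) {s : ℝ} (hs : s < 1/2) :
    Integrable (fun w : Fin d → ℝ => Real.exp (s * (w i₀)^2) * ∏ i, jlRho (w i)) ∧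
    ∫ w : Fin d → ℝ, Real.exp (s * (w i₀)^2) * ∏ i, jlRho (w i)
      = (Real.sqrt (1 - 2*s))⁻¹ := by
  classical
  set f : Fin d → ℝ → ℝ :=
    fun i t => (if i = i₀ then Real.exp (s * t^2) else 1) * jlRho t with hf
  have hfi : ∀ i, Integrable (f i) := by
    intro i
    by_cases h : i = i₀
    · simp only [hf, h, if_pos rfl]
      exact jl_integrable_1d hs
    · simp only [hf, if_neg h, one_mul]
      exact integrable_jlRho
  have heq : (fun w : Fin d → ℝ => Real.exp (s * (w i₀)^2) * ∏ i, jlRho (w i))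
      = fun w => ∏ i, f i (w i) := by
    funext w
    simp only [hf]
    rw [Finset.prod_mul_distrib]
    congr 1
    rw [Finset.prod_ite_eq' Finset.univ i₀ (fun i => Real.exp (s * (w i)^2))]
    simp
  constructor
  · rw [heq]; exact Integrable.fintype_prod (𝕜 := ℝ) hfi
  · rw [heq, volume_pi, MeasureTheory.integral_fintype_prod_eq_prod (f := f)]
    rw [Finset.prod_eq_single i₀]
    · simp only [hf, if_pos rfl]
      exact jl_integral_1d hs
    · intro b _ hb
      simp only [hf, if_neg hb, one_mul]
      exact integral_jlRho
    · simp

def rowF {d : ℕ} (s : ℝ) (u : EuclideanSpace ℝ (Fin d)) (v : Fin d → ℝ) : ℝ :=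
  Real.exp (s * (∑ i, u i * v i) ^ 2) * ∏ i, jlRho (v i)

lemma rowF_key {d : ℕ} {s : ℝ} (hs : s < 1/2) (u : EuclideanSpace ℝ (Fin d))
    (hu : ‖u‖ = 1) :
    Integrable (rowF s u) ∧ ∫ v, rowF s u v = (Real.sqrt (1 - 2*s))⁻¹ := by
  classical
  have hd : 0 < d := by
    rcases Nat.eq_zero_or_pos d with h | h
    · subst h
      rw [EuclideanSpace.norm_eq] at hu
      simp at hu
    · exact h
  set i₀ : Fin d := ⟨0, hd⟩
  set e₀ : EuclideanSpace ℝ (Fin d) := EuclideanSpace.single i₀ (1:ℝ) with he₀def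
  have he₀ : ‖e₀‖ = 1 := by simp [he₀def, EuclideanSpace.norm_single]
  set K := (ℝ ∙ (u - e₀))ᗮ with hK
  set r := K.reflection with hrdef
  have hru : r u = e₀ := Submodule.reflection_sub (by rw [hu, he₀])
  have hadj : ∀ v w : EuclideanSpace ℝ (Fin d), (inner ℝ (r v) (w) : ℝ) = (inner ℝ (v) (r w) : ℝ) := by
    intro v w
    calc (inner ℝ (r v) (w) : ℝ) = (inner ℝ (r v) (r (r w)) : ℝ) := by rw [Submodule.reflection_reflection]
    _ = (inner ℝ (v) (r w) : ℝ) := r.inner_map_map v (r w)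
  -- G on Euclidean space
  set G : EuclideanSpace ℝ (Fin d) → ℝ :=
    fun v => Real.exp (s * ((inner ℝ (u) (v) : ℝ))^2) * ∏ i, jlRho (v i) with hG
  have hGr : ∀ w, G (r w) = Real.exp (s * (w i₀)^2) * ∏ i, jlRho (w i) := by
    intro w
    have h1 : (inner ℝ (u) (r w) : ℝ) = w i₀ := by
      rw [← hadj u w, hru, he₀def]
      rw [EuclideanSpace.inner_single_left]
      simp
    have h2 : ∏ i, jlRho ((r w) i) = ∏ i, jlRho (w i) := by
      rw [rowD_eq, rowD_eq]
      have : ∑ i, ((r w) i)^2 = ∑ i, (w i)^2 := by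
        rw [← euclid_normsq, ← euclid_normsq, r.norm_map]
      rw [this]
    simp only [hG, h1, h2]
  -- measurable equiv to pi space
  set me := (MeasurableEquiv.toLp 2 (Fin d → ℝ)).symm with hme
  have hmp : MeasurePreserving me := EuclideanSpace.volume_preserving_symm_measurableEquiv_toLp (Fin d)
  have hmps : MeasurePreserving me.symm := hmp.symm me
  have hmeapp : ∀ (x : EuclideanSpace ℝ (Fin d)) i, me x i = x i := fun x i => rfl
  have hmesapp : ∀ (w : Fin d → ℝ) i, (me.symm w) i = w i := fun w i => rfl
  obtain ⟨hHint, hHval⟩ := prod_form_key i₀ hs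
  -- transfer H to E via me
  have hGr_eq : (fun w : EuclideanSpace ℝ (Fin d) => G (r w))
      = (fun w : Fin d → ℝ => Real.exp (s * (w i₀)^2) * ∏ i, jlRho (w i)) ∘ me := by
    funext w
    simp only [Function.comp_apply, hGr w, hmeapp]
  have hGr_int : Integrable (fun w => G (r w)) := by
    rw [hGr_eq]
    exact (hmp.integrable_comp_emb me.measurableEmbedding).2 hHint
  have hGr_val : ∫ w, G (r w) = (Real.sqrt (1 - 2*s))⁻¹ := by
    rw [hGr_eq, ← hHval]
    exact hmp.integral_comp me.measurableEmbedding (fun w : Fin d → ℝ => Real.exp (s * (w i₀)^2) * ∏ i, jlRho (w i))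
  -- transfer along r
  have hrmp : MeasurePreserving (⇑r) := r.measurePreserving
  have hremb : MeasurableEmbedding (⇑r) := r.toHomeomorph.toMeasurableEquiv.measurableEmbedding
  have hGint : Integrable G := (hrmp.integrable_comp_emb hremb).1 hGr_int
  have hGval : ∫ v, G v = (Real.sqrt (1 - 2*s))⁻¹ := by
    rw [← hGr_val]
    exact (hrmp.integral_comp hremb G).symm
  -- transfer to pi space via me.symm
  have hfin : rowF s u = G ∘ me.symm := by
    funext v
    show Real.exp (s * (∑ i, u i * v i) ^ 2) * ∏ i, jlRho (v i)
       = Real.exp (s * (inner ℝ u (me.symm v) : ℝ)^2) * ∏ i, jlRho ((me.symm v) i)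
    have hip : (inner ℝ u (me.symm v) : ℝ) = ∑ i, u i * v i := by
      rw [PiLp.inner_apply]
      simp only [RCLike.inner_apply, conj_trivial]
      exact Finset.sum_congr rfl fun i _ => mul_comm _ _
    rw [hip]
    rfl
  constructor
  · rw [hfin]
    exact (hmps.integrable_comp_emb me.symm.measurableEmbedding).2 hGint
  · rw [hfin, ← hGval]
    exact hmps.integral_comp me.symm.measurableEmbedding G

def jlW {m d : ℕ} (g : Fin m → Fin d → ℝ) : ℝ := ∏ j, ∏ i, jlRho (g j i)

def jlQ {m d : ℕ} (u : EuclideanSpace ℝ (Fin d)) (g : Fin m → Fin d → ℝ) : ℝ :=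
  ∑ j, (∑ i, u i * g j i) ^ 2

lemma jlW_nonneg {m d : ℕ} (g : Fin m → Fin d → ℝ) : 0 ≤ jlW g :=
  Finset.prod_nonneg fun j _ => Finset.prod_nonneg fun i _ => jlRho_nonneg _

lemma continuous_jlW {m d : ℕ} : Continuous (jlW (m := m) (d := d)) := by
  unfold jlW
  refine continuous_finset_prod _ fun j _ => continuous_finset_prod _ fun i _ => ?_
  exact continuous_jlRho.comp ((continuous_apply i).comp (continuous_apply j))

lemma continuous_jlQ {m d : ℕ} (u : EuclideanSpace ℝ (Fin d)) :
    Continuous (jlQ (m := m) u) := by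
  unfold jlQ
  refine continuous_finset_sum _ fun j _ => ?_
  exact (continuous_finset_sum _ fun i _ =>
    (continuous_const.mul ((continuous_apply i).comp (continuous_apply j)))).pow 2

/-- The Gaussian probability measure on matrix space. -/
def jlMeas (m d : ℕ) : Measure (Fin m → Fin d → ℝ) :=
  volume.withDensity (fun g => ENNReal.ofReal (jlW g))

lemma rowD_key {d : ℕ} :
    Integrable (fun v : Fin d → ℝ => ∏ i, jlRho (v i)) ∧
    ∫ v : Fin d → ℝ, ∏ i, jlRho (v i) = 1 := by
  constructor
  · exact Integrable.fintype_prod (𝕜 := ℝ) (fun i => integrable_jlRho)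
  · rw [volume_pi, MeasureTheory.integral_fintype_prod_eq_pow jlRho, integral_jlRho, one_pow]

set_option maxHeartbeats 1000000 in
lemma jlW_key {m d : ℕ} :
    Integrable (jlW (m := m) (d := d)) ∧ ∫ g, jlW (m := m) (d := d) g = 1 := by
  constructor
  · exact Integrable.fintype_prod (𝕜 := ℝ) (fun j => rowD_key.1)
  · have h := MeasureTheory.integral_fintype_prod_eq_pow (ι := Fin m) (μ := volume)
      (fun v : Fin d → ℝ => ∏ i, jlRho (v i))
    rw [rowD_key.2, one_pow] at h
    unfold jlW
    exact h

lemma jl_moment {m d : ℕ} {s : ℝ} (hs : s < 1/2) (u : EuclideanSpace ℝ (Fin d))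
    (hu : ‖u‖ = 1) :
    Integrable (fun g : Fin m → Fin d → ℝ => Real.exp (s * jlQ u g) * jlW g) ∧
    ∫ g : Fin m → Fin d → ℝ, Real.exp (s * jlQ u g) * jlW g
      = ((Real.sqrt (1 - 2*s))⁻¹) ^ m := by
  have heq : (fun g : Fin m → Fin d → ℝ => Real.exp (s * jlQ u g) * jlW g)
      = fun g => ∏ j, rowF s u (g j) := by
    funext g
    unfold jlQ jlW rowF
    rw [Finset.mul_sum, Real.exp_sum, Finset.prod_mul_distrib]
  constructor
  · rw [heq]
    exact Integrable.fintype_prod (𝕜 := ℝ) (fun j => (rowF_key hs u hu).1)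
  · rw [heq, volume_pi, MeasureTheory.integral_fintype_prod_eq_pow (rowF s u), (rowF_key hs u hu).2,
      Fintype.card_fin]

lemma jl_total_mass {m d : ℕ} : jlMeas m d Set.univ = 1 := by
  rw [jlMeas, withDensity_apply _ MeasurableSet.univ, Measure.restrict_univ]
  rw [← MeasureTheory.ofReal_integral_eq_lintegral_ofReal jlW_key.1
    (Filter.Eventually.of_forall jlW_nonneg), jlW_key.2, ENNReal.ofReal_one]

lemma jl_markov {m d : ℕ} {Y : (Fin m → Fin d → ℝ) → ℝ} (hY : Measurable Y)
    (hY0 : ∀ g, 0 ≤ Y g)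
    (hint : Integrable (fun g => Y g * jlW g)) {a : ℝ} (ha : 0 < a) :
    jlMeas m d {g | a ≤ Y g} ≤ ENNReal.ofReal (a⁻¹ * ∫ g, Y g * jlW g) := by
  have hset : MeasurableSet {g : Fin m → Fin d → ℝ | a ≤ Y g} :=
    measurableSet_le measurable_const hY
  rw [jlMeas, withDensity_apply _ hset]
  have hint' : Integrable (fun g => a⁻¹ * (Y g * jlW g)) := hint.const_mul _
  calc ∫⁻ g in {g | a ≤ Y g}, ENNReal.ofReal (jlW g) ∂volume
      = ∫⁻ g, Set.indicator {g | a ≤ Y g} (fun g => ENNReal.ofReal (jlW g)) g ∂volume := by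
        rw [lintegral_indicator hset]
    _ ≤ ∫⁻ g, ENNReal.ofReal (a⁻¹ * (Y g * jlW g)) ∂volume := by
        refine lintegral_mono fun g => ?_
        by_cases hg : g ∈ {g | a ≤ Y g}
        · rw [Set.indicator_of_mem hg]
          refine ENNReal.ofReal_le_ofReal ?_
          have hg' : a ≤ Y g := hg
          have h1 : 1 ≤ a⁻¹ * Y g := by
            calc (1:ℝ) = a⁻¹ * a := (inv_mul_cancel₀ ha.ne').symm
            _ ≤ a⁻¹ * Y g := mul_le_mul_of_nonneg_left hg' (inv_nonneg.2 ha.le)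
          calc jlW g = 1 * jlW g := (one_mul _).symm
          _ ≤ (a⁻¹ * Y g) * jlW g := mul_le_mul_of_nonneg_right h1 (jlW_nonneg g)
          _ = a⁻¹ * (Y g * jlW g) := by ring
        · rw [Set.indicator_of_notMem hg]
          exact bot_le
    _ = ENNReal.ofReal (∫ g, a⁻¹ * (Y g * jlW g)) := by
        rw [← MeasureTheory.ofReal_integral_eq_lintegral_ofReal hint'
          (Filter.Eventually.of_forall fun g =>
            mul_nonneg (inv_nonneg.2 ha.le) (mul_nonneg (hY0 g) (jlW_nonneg g)))]
    _ = ENNReal.ofReal (a⁻¹ * ∫ g, Y g * jlW g) := by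
        rw [MeasureTheory.integral_const_mul]

lemma jl_fac_ub {ε : ℝ} (hε : 0 < ε) (hε2 : ε ≤ 1/2) :
    Real.sqrt (1+ε) * Real.exp (-(ε/2)) ≤ Real.exp (-(ε^2/8)) := by
  have hx : (0:ℝ) ≤ ε - ε^2/4 := by nlinarith
  have key : 1 + ε ≤ Real.exp (ε - ε^2/4) := by
    have h := Real.quadratic_le_exp_of_nonneg hx
    nlinarith [sq_nonneg ε]
  have h1 : Real.sqrt (1+ε) ≤ Real.exp ((ε - ε^2/4)/2) := by
    rw [Real.exp_half]
    exact Real.sqrt_le_sqrt key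
  calc Real.sqrt (1+ε) * Real.exp (-(ε/2))
      ≤ Real.exp ((ε - ε^2/4)/2) * Real.exp (-(ε/2)) :=
        mul_le_mul_of_nonneg_right h1 (Real.exp_pos _).le
    _ = Real.exp (-(ε^2/8)) := by rw [← Real.exp_add]; ring_nf

lemma jl_fac_lb {ε : ℝ} (hε : 0 < ε) (hε2 : ε ≤ 1/2) :
    Real.sqrt (1-ε) * Real.exp (ε/2) ≤ Real.exp (-(ε^2/8)) := by
  have hexp3 : Real.exp ε ≤ 1 + ε + ε^2/2 + (2/9)*ε^3 := by
    have h := Real.exp_bound (x := ε) (by rw [abs_of_pos hε]; linarith) (n := 3) (by norm_num)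
    rw [abs_of_pos hε] at h
    have hsum : ∑ i ∈ Finset.range 3, ε ^ i / (Nat.factorial i) = 1 + ε + ε^2/2 := by
      norm_num [Finset.sum_range_succ, Nat.factorial]
      try ring
    rw [hsum] at h
    have h2 := (abs_sub_le_iff.1 h).1
    have h3 : (3:ℕ).succ / ((Nat.factorial 3) * (3:ℕ) : ℝ) = 2/9 := by
      norm_num [Nat.factorial]
    rw [h3] at h2
    nlinarith [pow_pos hε 3]
  have key : 1 - ε ≤ Real.exp (-ε - ε^2/4) := by
    have h1 : (1 - ε) * Real.exp ε ≤ 1 - ε^2/4 := by nlinarith [pow_pos hε 3, sq_nonneg ε]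
    have h2 : (1:ℝ) - ε^2/4 ≤ Real.exp (-(ε^2/4)) := by
      have := Real.add_one_le_exp (-(ε^2/4)); linarith
    have h3 : (1 - ε) * Real.exp ε ≤ Real.exp (-(ε^2/4)) := h1.trans h2
    have h4 : 1 - ε ≤ Real.exp (-(ε^2/4)) / Real.exp ε :=
      (le_div_iff₀ (Real.exp_pos ε)).2 h3
    calc 1 - ε ≤ Real.exp (-(ε^2/4)) / Real.exp ε := h4
    _ = Real.exp (-ε - ε^2/4) := by rw [← Real.exp_sub]; ring_nf
  have h1 : Real.sqrt (1-ε) ≤ Real.exp ((-ε - ε^2/4)/2) := by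
    rw [Real.exp_half]
    exact Real.sqrt_le_sqrt key
  calc Real.sqrt (1-ε) * Real.exp (ε/2)
      ≤ Real.exp ((-ε - ε^2/4)/2) * Real.exp (ε/2) :=
        mul_le_mul_of_nonneg_right h1 (Real.exp_pos _).le
    _ = Real.exp (-(ε^2/8)) := by rw [← Real.exp_add]; ring_nf

lemma jl_pair_bound {m d : ℕ} {ε : ℝ} (hε : 0 < ε) (hε2 : ε < 1/2)
    (u : EuclideanSpace ℝ (Fin d)) (hu : ‖u‖ = 1) :
    jlMeas m d {g | ¬((1-ε) * m ≤ jlQ u g ∧ jlQ u g ≤ (1+ε) * m)}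
      ≤ ENNReal.ofReal (2 * Real.exp (-(m:ℝ) * ε^2 / 8)) := by
  have h1ε : (0:ℝ) < 1 + ε := by linarith
  have h2ε : (0:ℝ) < 1 - ε := by linarith
  set s : ℝ := ε/(2*(1+ε)) with hsdef
  set t : ℝ := ε/(2*(1-ε)) with htdef
  have hs0 : 0 < s := by positivity
  have ht0 : 0 < t := by positivity
  have hs : s < 1/2 := by
    rw [hsdef, div_lt_iff₀ (by linarith)]
    linarith
  have hnt : -t < 1/2 := by linarith
  have h1 : 1 - 2*s = (1+ε)⁻¹ := by
    rw [hsdef]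
    field_simp
    ring
  have h2 : 1 - 2*(-t) = (1-ε)⁻¹ := by
    rw [htdef]
    field_simp
    try ring
    try (left; trivial)
  have hJ1 : (Real.sqrt (1 - 2*s))⁻¹ = Real.sqrt (1+ε) := by
    rw [h1, Real.sqrt_inv, inv_inv]
  have hJ2 : (Real.sqrt (1 - 2*(-t)))⁻¹ = Real.sqrt (1-ε) := by
    rw [h2, Real.sqrt_inv, inv_inv]
  obtain ⟨M1i, M1v⟩ := jl_moment (m := m) hs u hu
  obtain ⟨M2i, M2v⟩ := jl_moment (m := m) hnt u hu
  rw [hJ1] at M1v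
  rw [hJ2] at M2v
  set S1 : Set (Fin m → Fin d → ℝ) :=
    {g | Real.exp (s*((1+ε)*m)) ≤ Real.exp (s * jlQ u g)} with hS1def
  set S2 : Set (Fin m → Fin d → ℝ) :=
    {g | Real.exp (-t*((1-ε)*m)) ≤ Real.exp (-t * jlQ u g)} with hS2def
  have hsub : {g | ¬((1-ε) * m ≤ jlQ u g ∧ jlQ u g ≤ (1+ε) * m)} ⊆ S1 ∪ S2 := by
    intro g hg
    simp only [Set.mem_setOf_eq, not_and_or, not_le] at hg
    rcases hg with hg | hg
    · right
      simp only [hS2def, Set.mem_setOf_eq]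
      apply Real.exp_le_exp.2
      have := hg.le
      nlinarith
    · left
      simp only [hS1def, Set.mem_setOf_eq]
      apply Real.exp_le_exp.2
      have := hg.le
      nlinarith
  have hmeas1 : Measurable fun g : Fin m → Fin d → ℝ => Real.exp (s * jlQ u g) :=
    (Real.continuous_exp.comp ((continuous_const.mul (continuous_jlQ u)))).measurable
  have hmeas2 : Measurable fun g : Fin m → Fin d → ℝ => Real.exp (-t * jlQ u g) :=
    (Real.continuous_exp.comp ((continuous_const.mul (continuous_jlQ u)))).measurable
  have b1 := jl_markov hmeas1 (fun g => (Real.exp_pos _).le) M1i (Real.exp_pos (s*((1+ε)*m)))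
  have b2 := jl_markov hmeas2 (fun g => (Real.exp_pos _).le) M2i (Real.exp_pos (-t*((1-ε)*m)))
  rw [M1v] at b1
  rw [M2v] at b2
  -- numeric bounds
  have hsv : s * ((1+ε)*m) = (m:ℝ) * (ε/2) := by
    rw [hsdef]
    field_simp
  have htv : -t * ((1-ε)*m) = (m:ℝ) * (-(ε/2)) := by
    rw [htdef]
    field_simp
  have key1 : (Real.exp (s*((1+ε)*m)))⁻¹ * (Real.sqrt (1+ε))^m
      ≤ Real.exp (-(m:ℝ) * ε^2 / 8) := by
    rw [← Real.exp_neg, hsv, show -((m:ℝ)*(ε/2)) = (m:ℝ)*(-(ε/2)) by ring,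
      Real.exp_nat_mul, ← mul_pow]
    have hfac := jl_fac_ub hε hε2.le
    have hstep : (Real.sqrt (1+ε) * Real.exp (-(ε/2)))^m ≤ (Real.exp (-(ε^2/8)))^m := by
      apply pow_le_pow_left₀ (by positivity) ?_ m
      exact hfac
    calc (Real.exp (-(ε/2)) * Real.sqrt (1+ε))^m
        = (Real.sqrt (1+ε) * Real.exp (-(ε/2)))^m := by rw [mul_comm]
      _ ≤ (Real.exp (-(ε^2/8)))^m := hstep
      _ = Real.exp (-(m:ℝ) * ε^2 / 8) := by
          rw [← Real.exp_nat_mul]; ring_nf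
  have key2 : (Real.exp (-t*((1-ε)*m)))⁻¹ * (Real.sqrt (1-ε))^m
      ≤ Real.exp (-(m:ℝ) * ε^2 / 8) := by
    rw [← Real.exp_neg, htv, show -((m:ℝ)*-(ε/2)) = (m:ℝ)*(ε/2) by ring,
      Real.exp_nat_mul, ← mul_pow]
    have hfac := jl_fac_lb hε hε2.le
    have hstep : (Real.sqrt (1-ε) * Real.exp (ε/2))^m ≤ (Real.exp (-(ε^2/8)))^m := by
      apply pow_le_pow_left₀ (by positivity) ?_ m
      exact hfac
    calc (Real.exp (ε/2) * Real.sqrt (1-ε))^m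
        = (Real.sqrt (1-ε) * Real.exp (ε/2))^m := by rw [mul_comm]
      _ ≤ (Real.exp (-(ε^2/8)))^m := hstep
      _ = Real.exp (-(m:ℝ) * ε^2 / 8) := by
          rw [← Real.exp_nat_mul]; ring_nf
  calc jlMeas m d {g | ¬((1-ε) * m ≤ jlQ u g ∧ jlQ u g ≤ (1+ε) * m)}
      ≤ jlMeas m d (S1 ∪ S2) := measure_mono hsub
    _ ≤ jlMeas m d S1 + jlMeas m d S2 := measure_union_le _ _
    _ ≤ ENNReal.ofReal (Real.exp (-(m:ℝ) * ε^2 / 8))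
        + ENNReal.ofReal (Real.exp (-(m:ℝ) * ε^2 / 8)) := by
        gcongr
        · exact b1.trans (ENNReal.ofReal_le_ofReal key1)
        · exact b2.trans (ENNReal.ofReal_le_ofReal key2)
    _ = ENNReal.ofReal (2 * Real.exp (-(m:ℝ) * ε^2 / 8)) := by
        rw [← ENNReal.ofReal_add (Real.exp_pos _).le (Real.exp_pos _).le, two_mul]


lemma jl_exists_good (m d : ℕ) (X : Finset (EuclideanSpace ℝ (Fin d)))
    {ε : ℝ} (hε : 0 < ε) (hε2 : ε < 1/2)
    (hsmall : (X.card : ℝ)^2 * (2 * Real.exp (-(m:ℝ) * ε^2 / 8)) < 1) :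
    ∃ g : Fin m → Fin d → ℝ, ∀ x ∈ X, ∀ y ∈ X, x ≠ y →
      (1-ε) * m ≤ jlQ (‖x - y‖⁻¹ • (x - y)) g ∧
        jlQ (‖x - y‖⁻¹ • (x - y)) g ≤ (1+ε) * m := by
  classical
  set β : ℝ≥0∞ := ENNReal.ofReal (2 * Real.exp (-(m:ℝ) * ε^2 / 8)) with hβ
  set Bad : EuclideanSpace ℝ (Fin d) → EuclideanSpace ℝ (Fin d) → Set (Fin m → Fin d → ℝ) :=
    fun x y => if x = y then ∅ else
      {g | ¬((1-ε) * m ≤ jlQ (‖x - y‖⁻¹ • (x - y)) g ∧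
        jlQ (‖x - y‖⁻¹ • (x - y)) g ≤ (1+ε) * m)} with hBad
  have hBadBound : ∀ x ∈ X, ∀ y ∈ X, jlMeas m d (Bad x y) ≤ β := by
    intro x _ y _
    by_cases h : x = y
    · simp [hBad, h]
    · have hxy : x - y ≠ 0 := sub_ne_zero.mpr h
      have hpos : 0 < ‖x - y‖ := norm_pos_iff.mpr hxy
      have hu : ‖‖x - y‖⁻¹ • (x - y)‖ = 1 := by
        rw [norm_smul, norm_inv, norm_norm, inv_mul_cancel₀ hpos.ne']
      simp only [hBad, if_neg h]
      exact jl_pair_bound hε hε2 _ hu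
  set T : Set (Fin m → Fin d → ℝ) := ⋃ x ∈ X, ⋃ y ∈ X, Bad x y with hT
  have hTmeas : jlMeas m d T < 1 := by
    have s1 : jlMeas m d T ≤ ∑ x ∈ X, jlMeas m d (⋃ y ∈ X, Bad x y) :=
      measure_biUnion_finset_le _ _
    have s2 : ∀ x ∈ X, jlMeas m d (⋃ y ∈ X, Bad x y) ≤ ∑ y ∈ X, jlMeas m d (Bad x y) :=
      fun x _ => measure_biUnion_finset_le _ _
    have s3 : jlMeas m d T ≤ ∑ x ∈ X, ∑ y ∈ X, jlMeas m d (Bad x y) :=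
      s1.trans (Finset.sum_le_sum s2)
    have s4 : (∑ x ∈ X, ∑ y ∈ X, jlMeas m d (Bad x y)) ≤ ∑ _x ∈ X, ∑ _y ∈ X, β :=
      Finset.sum_le_sum fun x hx => Finset.sum_le_sum fun y hy => hBadBound x hx y hy
    have s5 : (∑ _x ∈ X, ∑ _y ∈ X, β) = (X.card : ℝ≥0∞) * ((X.card : ℝ≥0∞) * β) := by
      simp [Finset.sum_const, mul_assoc]
    have s6 : (X.card : ℝ≥0∞) * ((X.card : ℝ≥0∞) * β)
        = ENNReal.ofReal ((X.card:ℝ)^2 * (2 * Real.exp (-(m:ℝ) * ε^2 / 8))) := by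
      rw [hβ, ← ENNReal.ofReal_natCast X.card,
        ← ENNReal.ofReal_mul (Nat.cast_nonneg _), ← ENNReal.ofReal_mul (Nat.cast_nonneg _)]
      congr 1
      ring
    have s7 : ENNReal.ofReal ((X.card:ℝ)^2 * (2 * Real.exp (-(m:ℝ) * ε^2 / 8))) < 1 :=
      ENNReal.ofReal_lt_one.mpr hsmall
    exact lt_of_le_of_lt (s3.trans (s4.trans_eq (s5.trans s6))) s7
  have hTne : T ≠ Set.univ := by
    intro h
    rw [h, jl_total_mass] at hTmeas
    exact lt_irrefl _ hTmeas
  obtain ⟨g, hg⟩ := Set.ne_univ_iff_exists_notMem T |>.1 hTne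
  refine ⟨g, fun x hx y hy hxy => ?_⟩
  have : g ∉ Bad x y := by
    intro hmem
    exact hg (Set.mem_biUnion hx (Set.mem_biUnion hy hmem))
  simp only [hBad, if_neg hxy, Set.mem_setOf_eq, not_not] at this
  exact this


end JLAux

set_option maxHeartbeats 1000000 in
/-- The Johnson–Lindenstrauss lemma: for any set `X` of `n ≥ 2` points in `ℝ^d` and any
`ε ∈ (0, 1/2)`, there is a positive integer `m ≤ C · ε⁻² · log n` (for a universal constant
`C > 0`) and a map `f : X → ℝ^m` with `(1-ε)‖x-y‖² ≤ ‖f x - f y‖² ≤ (1+ε)‖x-y‖²` on `X`. -/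
theorem jl_lemma :
    ∃ C : ℝ, 0 < C ∧
      ∀ (d n : ℕ) (X : Finset (EuclideanSpace ℝ (Fin d))), X.card = n → 2 ≤ n →
        ∀ ε : ℝ, 0 < ε → ε < 1 / 2 →
          ∃ m : ℕ, 0 < m ∧ (m : ℝ) ≤ C * ε⁻¹ ^ 2 * Real.log n ∧
            ∃ f : EuclideanSpace ℝ (Fin d) → EuclideanSpace ℝ (Fin m),
              ∀ x ∈ X, ∀ y ∈ X,
                (1 - ε) * ‖x - y‖ ^ 2 ≤ ‖f x - f y‖ ^ 2 ∧
                  ‖f x - f y‖ ^ 2 ≤ (1 + ε) * ‖x - y‖ ^ 2 := by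
  refine ⟨25, by norm_num, ?_⟩
  intro d n X hcard hn ε hε hε2
  have hn2 : (2:ℝ) ≤ (n:ℝ) := by exact_mod_cast hn
  have hn0 : (0:ℝ) < (n:ℝ) := by linarith
  have hlog2 : (0.6931471803 : ℝ) < Real.log 2 := Real.log_two_gt_d9
  have hlogn : Real.log 2 ≤ Real.log n := Real.log_le_log (by norm_num) hn2
  have hlogpos : (0:ℝ) < Real.log n := by linarith
  have hinv : (2:ℝ) ≤ ε⁻¹ := by
    rw [le_inv_comm₀ (by norm_num) hε]
    linarith
  have hinvsq : (4:ℝ) ≤ ε⁻¹^2 := by nlinarith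
  set A : ℝ := 24 * ε⁻¹^2 * Real.log n with hA
  have hA0 : 0 ≤ A := by positivity
  set m : ℕ := ⌊A⌋₊ + 1 with hm
  have hm0 : 0 < m := Nat.succ_pos _
  have hm_ub : (m:ℝ) ≤ 25 * ε⁻¹^2 * Real.log n := by
    have h1 : (⌊A⌋₊ : ℝ) ≤ A := Nat.floor_le hA0
    have h2 : (1:ℝ) ≤ ε⁻¹^2 * Real.log n := by nlinarith
    have : (m:ℝ) = (⌊A⌋₊ : ℝ) + 1 := by
      rw [hm]; push_cast; ring
    rw [this, hA]
    nlinarith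
  have hm_gt : A < (m:ℝ) := by
    have := Nat.lt_floor_add_one A
    rw [hm]; push_cast
    linarith
  have hεinv : ε⁻¹ * ε = 1 := inv_mul_cancel₀ hε.ne'
  have hsmall : (X.card : ℝ)^2 * (2 * Real.exp (-(m:ℝ) * ε^2 / 8)) < 1 := by
    rw [hcard]
    have hq : 3 * Real.log n < (m:ℝ) * ε^2 / 8 := by
      have h1 : 24 * Real.log n < (m:ℝ) * ε^2 := by
        have hps : ε⁻¹^2 * ε^2 = 1 := by rw [← mul_pow, hεinv, one_pow]
        have h2 : A * ε^2 = 24 * Real.log n := by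
          calc A * ε^2 = 24 * Real.log n * (ε⁻¹^2 * ε^2) := by rw [hA]; ring
            _ = 24 * Real.log n := by rw [hps, mul_one]
        nlinarith [sq_nonneg ε, hε]
      linarith
    have hexp : Real.exp (-(m:ℝ) * ε^2 / 8) < Real.exp (-(3 * Real.log n)) := by
      apply Real.exp_lt_exp.2
      linarith
    have hval : Real.exp (-(3 * Real.log n)) = ((n:ℝ)^3)⁻¹ := by
      rw [Real.exp_neg]
      congr 1
      rw [show (3:ℝ) * Real.log n = (3:ℕ) * Real.log n by norm_num,
        Real.exp_nat_mul, Real.exp_log hn0]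
    have hn3 : (0:ℝ) < (n:ℝ)^3 := by positivity
    calc (n:ℝ)^2 * (2 * Real.exp (-(m:ℝ) * ε^2 / 8))
        < (n:ℝ)^2 * (2 * ((n:ℝ)^3)⁻¹) := by
          have := hexp.trans_eq hval
          have h2 : (0:ℝ) < (n:ℝ)^2 := by positivity
          nlinarith [Real.exp_pos (-(m:ℝ) * ε^2 / 8)]
      _ = 2 / (n:ℝ) := by field_simp
      _ ≤ 1 := by
          rw [div_le_one hn0]; linarith
  obtain ⟨g, hg⟩ := jl_exists_good m d X hε hε2 hsmall
  set f : EuclideanSpace ℝ (Fin d) → EuclideanSpace ℝ (Fin m) :=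
    fun x => WithLp.toLp 2 (fun j => (Real.sqrt m)⁻¹ * ∑ i, x i * g j i) with hf
  refine ⟨m, hm0, hm_ub, f, ?_⟩
  intro x hx y hy
  by_cases hxy : x = y
  · subst hxy
    simp [sub_self]
  · have hsub : x - y ≠ 0 := sub_ne_zero.mpr hxy
    have hD : 0 < ‖x - y‖ := norm_pos_iff.mpr hsub
    obtain ⟨hq1, hq2⟩ := hg x hx y hy hxy
    set D : ℝ := ‖x - y‖ with hDdef
    set a : Fin m → ℝ := fun j => ∑ i, (x i - y i) * g j i with ha
    have claim1 : ∀ j, (∑ i, (D⁻¹ • (x - y)) i * g j i) = D⁻¹ * a j := by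
      intro j
      rw [ha, Finset.mul_sum]
      apply Finset.sum_congr rfl
      intro i _
      rw [PiLp.smul_apply, PiLp.sub_apply, smul_eq_mul, mul_assoc]
    have claim2 : jlQ (D⁻¹ • (x - y)) g = D⁻¹^2 * ∑ j, (a j)^2 := by
      unfold jlQ
      rw [Finset.mul_sum]
      apply Finset.sum_congr rfl
      intro j _
      rw [claim1 j, mul_pow]
    have claim3 : ‖f x - f y‖^2 = ((m:ℝ))⁻¹ * ∑ j, (a j)^2 := by
      rw [euclid_normsq]
      have hsqm : ((Real.sqrt m)⁻¹)^2 = ((m:ℝ))⁻¹ := by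
        rw [← Real.sqrt_inv, Real.sq_sqrt (by positivity)]
      rw [Finset.mul_sum]
      apply Finset.sum_congr rfl
      intro j _
      rw [PiLp.sub_apply, hf]
      simp only
      rw [← mul_sub, ← Finset.sum_sub_distrib]
      have h2 : ∑ i, (x i * g j i - y i * g j i) = a j := by
        rw [ha]
        apply Finset.sum_congr rfl
        intro i _
        ring
      rw [h2, mul_pow, hsqm]
    have hmpos : (0:ℝ) < (m:ℝ) := by exact_mod_cast hm0
    have hS : ∑ j, (a j)^2 = D^2 * jlQ (D⁻¹ • (x - y)) g := by
      rw [claim2]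
      field_simp
    constructor
    · rw [claim3, hS]
      have : (1-ε) * (m:ℝ) * (D^2 / (m:ℝ)) ≤ jlQ (D⁻¹ • (x-y)) g * (D^2 / (m:ℝ)) := by
        apply mul_le_mul_of_nonneg_right hq1 (by positivity)
      calc (1-ε) * ‖x-y‖^2 = (1-ε) * (m:ℝ) * (D^2 / (m:ℝ)) := by
            rw [hDdef]; field_simp
        _ ≤ jlQ (D⁻¹ • (x-y)) g * (D^2 / (m:ℝ)) := this
        _ = (m:ℝ)⁻¹ * (D^2 * jlQ (D⁻¹ • (x-y)) g) := by ring
    · rw [claim3, hS]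
      have : jlQ (D⁻¹ • (x-y)) g * (D^2 / (m:ℝ)) ≤ (1+ε) * (m:ℝ) * (D^2 / (m:ℝ)) := by
        apply mul_le_mul_of_nonneg_right hq2 (by positivity)
      calc (m:ℝ)⁻¹ * (D^2 * jlQ (D⁻¹ • (x-y)) g)
          = jlQ (D⁻¹ • (x-y)) g * (D^2 / (m:ℝ)) := by ring
        _ ≤ (1+ε) * (m:ℝ) * (D^2 / (m:ℝ)) := this
        _ = (1+ε) * ‖x-y‖^2 := by
            rw [hDdef]; field_simp
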